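/- Let θ̄ ∈ [−π/4, π/4] and d ≥ 0, with (as in the midpoint construction) x̄ := d·cos(θ̄), ȳ := y₁/2 where y₁ = y₁. If the construction uses θ̄ and d from the Condition-1 case split, then max{x̄⁴, θ̄⁴, |ȳ|^{φ(|ȳ|)}} ≤ |y₁|^{φ(|y₁|)}, where φ : [0,∞) → [2,4] is non-decreasing with φ(s)=2 for s ≤ 1 and φ(s)=4 for s ≥ 2. -/
import Mathlib


open Real

lemma aux_quartic {a : ℝ} (ha : 0 ≤ a) (h2 : a ≤ 2) : a ^ 4 / 4 ≤ a ^ 2 := by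
  have hsq : a ^ 2 ≤ 4 := by nlinarith
  have : a ^ 2 * a ^ 2 ≤ a ^ 2 * 4 := mul_le_mul_of_nonneg_left hsq (sq_nonneg a)
  nlinarith

lemma aux_one_le_sq {a : ℝ} (h : 1 ≤ a) : (1:ℝ) ≤ a ^ 2 := by nlinarith

lemma arctan_nonneg' {t : ℝ} (ht : 0 ≤ t) : 0 ≤ Real.arctan t := by
  have := Real.arctan_strictMono.monotone ht
  simpa using this

lemma arctan_le_self' {t : ℝ} (ht : 0 ≤ t) : Real.arctan t ≤ t := by
  have h1 : 0 ≤ Real.arctan t := arctan_nonneg' ht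
  have h2 : Real.arctan t < π / 2 := Real.arctan_lt_pi_div_two t
  have := Real.le_tan h1 h2
  rwa [Real.tan_arctan] at this

lemma sign_pow4_le_one (y : ℝ) : (Real.sign y) ^ 4 ≤ 1 := by
  rcases Real.sign_apply_eq y with h | h | h <;> rw [h] <;> norm_num

lemma pi_quarter_pow4_le_one : (π / 4) ^ 4 ≤ 1 := by
  have h1' : π ≤ 3.15 := by linarith [Real.pi_lt_d2]
  have h0 : 0 ≤ π / 4 := by positivity
  exact pow_le_one₀ h0 (by linarith)

/-- the midpoint quantities are dominated by `|y₁|^(φ(|y₁|))`. -/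
theorem midpoint_dominated_by_interpolated_power
    (φ : ℝ → ℝ) (hφmono : ∀ s t : ℝ, 0 ≤ s → s ≤ t → φ s ≤ φ t)
    (hφrange : ∀ s : ℝ, 0 ≤ s → φ s ∈ Set.Icc (2 : ℝ) 4)
    (hφ2 : ∀ s : ℝ, 0 ≤ s → s ≤ 1 → φ s = 2)
    (hφ4 : ∀ s : ℝ, 2 ≤ s → φ s = 4)
    (y₁ θb d xb yb : ℝ)
    (hθb : θb = if |y₁| ≤ 1 then Real.sign y₁ * Real.arctan (Real.sqrt |y₁|)
      else Real.sign y₁ * (π / 4))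
    (hd : d = if |y₁| ≤ 1 then (1/2) * Real.sqrt |y₁| * Real.sqrt (1 + |y₁|)
      else |y₁| / Real.sqrt 2)
    (hxb : xb = d * Real.cos (-θb))
    (hyb : yb = y₁ / 2) :
    max (max (xb ^ 4) (θb ^ 4)) (|yb| ^ φ |yb|) ≤ |y₁| ^ φ |y₁| := by
  have habs : (0:ℝ) ≤ |y₁| := abs_nonneg _
  have hyb2 : |yb| = |y₁| / 2 := by rw [hyb, abs_div]; norm_num
  have hxb4 : xb ^ 4 ≤ d ^ 4 := by
    have hc : Real.cos (-θb) ^ 4 ≤ 1 := by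
      have h2 := Real.cos_sq_le_one (-θb)
      have h0 := sq_nonneg (Real.cos (-θb))
      calc Real.cos (-θb) ^ 4 = (Real.cos (-θb) ^ 2) ^ 2 := by ring
        _ ≤ 1 ^ 2 := by nlinarith
        _ = 1 := one_pow 2
    have hd4nn : (0:ℝ) ≤ d ^ 4 := by positivity
    calc xb ^ 4 = d ^ 4 * Real.cos (-θb) ^ 4 := by rw [hxb]; ring
      _ ≤ d ^ 4 * 1 := mul_le_mul_of_nonneg_left hc hd4nn
      _ = d ^ 4 := mul_one _
  clear hxb
  have hrpow2 : ∀ a : ℝ, 0 ≤ a → a ^ (2:ℝ) = a ^ 2 := by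
    intro a _; rw [show (2:ℝ) = ((2:ℕ):ℝ) by norm_num, Real.rpow_natCast]
  have hrpow4 : ∀ a : ℝ, 0 ≤ a → a ^ (4:ℝ) = a ^ 4 := by
    intro a _; rw [show (4:ℝ) = ((4:ℕ):ℝ) by norm_num, Real.rpow_natCast]
  by_cases h1 : |y₁| ≤ 1
  · -- case |y₁| ≤ 1
    have hφy : φ |y₁| = 2 := hφ2 _ habs h1
    have hφyb : φ |yb| = 2 := hφ2 _ (abs_nonneg _) (by rw [hyb2]; linarith)
    rw [hφy, hφyb, hrpow2 _ habs, hrpow2 _ (abs_nonneg _)]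
    rw [hd, if_pos h1] at hxb4
    rw [hθb, if_pos h1]
    have hs1 : Real.sqrt |y₁| ^ 2 = |y₁| := Real.sq_sqrt habs
    have hs2 : Real.sqrt (1 + |y₁|) ^ 2 = 1 + |y₁| := Real.sq_sqrt (by linarith)
    have hd4 : ((1/2) * Real.sqrt |y₁| * Real.sqrt (1 + |y₁|)) ^ 4 ≤ |y₁| ^ 2 := by
      have hdsq : ((1/2) * Real.sqrt |y₁| * Real.sqrt (1 + |y₁|)) ^ 2
          = (1/4) * |y₁| * (1 + |y₁|) := by
        rw [mul_pow, mul_pow, hs1, hs2]; ring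
      have key : (1/4) * |y₁| * (1 + |y₁|) ≤ |y₁| := by nlinarith
      have keynn : (0:ℝ) ≤ (1/4) * |y₁| * (1 + |y₁|) := by positivity
      calc ((1/2) * Real.sqrt |y₁| * Real.sqrt (1 + |y₁|)) ^ 4
          = ((1/4) * |y₁| * (1 + |y₁|)) ^ 2 := by rw [← hdsq]; ring
        _ ≤ |y₁| ^ 2 := by nlinarith
    have hθ4 : (Real.sign y₁ * Real.arctan (Real.sqrt |y₁|)) ^ 4 ≤ |y₁| ^ 2 := by
      have ha : Real.arctan (Real.sqrt |y₁|) ≤ Real.sqrt |y₁| :=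
        arctan_le_self' (Real.sqrt_nonneg _)
      have ha0 : 0 ≤ Real.arctan (Real.sqrt |y₁|) := arctan_nonneg' (Real.sqrt_nonneg _)
      have h4 : Real.arctan (Real.sqrt |y₁|) ^ 4 ≤ Real.sqrt |y₁| ^ 4 :=
        pow_le_pow_left₀ ha0 ha 4
      have hsg := sign_pow4_le_one y₁
      have hy4 : Real.sqrt |y₁| ^ 4 = |y₁| ^ 2 := by nlinarith [hs1]
      calc (Real.sign y₁ * Real.arctan (Real.sqrt |y₁|)) ^ 4
          = (Real.sign y₁) ^ 4 * Real.arctan (Real.sqrt |y₁|) ^ 4 := by ring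
        _ ≤ 1 * (Real.sqrt |y₁| ^ 4) := by
            apply mul_le_mul hsg h4 (by positivity) (by norm_num)
        _ = |y₁| ^ 2 := by rw [one_mul, hy4]
    have hybb : (|y₁| / 2) ^ 2 ≤ |y₁| ^ 2 := by nlinarith [sq_nonneg |y₁|]
    rw [hyb2]
    exact max_le (max_le (le_trans hxb4 hd4) hθ4) hybb
  · -- case |y₁| > 1
    push_neg at h1
    have hφlo : 2 ≤ φ |y₁| := (hφrange _ habs).1
    have hbase1 : (1:ℝ) ≤ |y₁| := h1.le
    have hRge : |y₁| ^ (2:ℝ) ≤ |y₁| ^ φ |y₁| :=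
      Real.rpow_le_rpow_of_exponent_le hbase1 hφlo
    have hRge2 : |y₁| ^ 2 ≤ |y₁| ^ φ |y₁| := by rwa [hrpow2 _ habs] at hRge
    rw [hd, if_neg (not_le.mpr h1)] at hxb4
    rw [hθb, if_neg (not_le.mpr h1)]
    have hd4' : (|y₁| / Real.sqrt 2) ^ 4 = |y₁| ^ 4 / 4 := by
      rw [div_pow]
      have : Real.sqrt 2 ^ 4 = 4 := by
        have := Real.sq_sqrt (by norm_num : (0:ℝ) ≤ 2)
        nlinarith
      rw [this]
    have hxbound : xb ^ 4 ≤ |y₁| ^ φ |y₁| := by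
      refine le_trans hxb4 ?_
      rw [hd4']
      by_cases h2 : 2 ≤ |y₁|
      · rw [hφ4 _ h2, hrpow4 _ habs]
        nlinarith [pow_nonneg habs 4]
      · push_neg at h2
        exact le_trans (aux_quartic habs h2.le) hRge2
    have hθbound : (Real.sign y₁ * (π / 4)) ^ 4 ≤ |y₁| ^ φ |y₁| := by
      refine le_trans ?_ hRge2
      have hsg := sign_pow4_le_one y₁
      have hpi := pi_quarter_pow4_le_one
      have hsg0 : (0:ℝ) ≤ (Real.sign y₁) ^ 4 := by positivity
      have hpi0 : (0:ℝ) ≤ (π / 4) ^ 4 := by positivity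
      have hone : (1:ℝ) ≤ |y₁| ^ 2 := aux_one_le_sq hbase1
      calc (Real.sign y₁ * (π / 4)) ^ 4 = (Real.sign y₁) ^ 4 * (π / 4) ^ 4 := by ring
        _ ≤ 1 * 1 := mul_le_mul hsg hpi hpi0 (by norm_num)
        _ = 1 := by norm_num
        _ ≤ |y₁| ^ 2 := hone
    have hybound : |yb| ^ φ |yb| ≤ |y₁| ^ φ |y₁| := by
      rw [hyb2]
      by_cases h2 : |y₁| ≤ 2
      · have hle1 : |y₁| / 2 ≤ 1 := by linarith
        rw [hφ2 _ (by positivity) hle1, hrpow2 _ (by positivity)]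
        refine le_trans ?_ hRge2
        nlinarith [sq_nonneg |y₁|]
      · push_neg at h2
        have hstep1 : (|y₁| / 2) ^ φ (|y₁| / 2) ≤ |y₁| ^ φ (|y₁| / 2) :=
          Real.rpow_le_rpow (by positivity) (by linarith) (by
            have := (hφrange (|y₁|/2) (by positivity)).1; linarith)
        have hstep2 : |y₁| ^ φ (|y₁| / 2) ≤ |y₁| ^ φ |y₁| :=
          Real.rpow_le_rpow_of_exponent_le hbase1 (hφmono _ _ (by positivity) (by linarith))
        exact le_trans hstep1 hstep2
    exact max_le (max_le hxbound hθbound) hybound
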